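/- Let σ : ℝ → ℝ be L_σ-Lipschitz. Fix y ∈ ℝⁿ with ‖y‖ ≤ √n C_y and z⁰, u⁰ ∈ ℝ^m with ‖z⁰‖ ≤ √m C_z and ‖u⁰‖ ≤ √m C_u, and for l = 1,…,L let W₁^l ∈ ℝ^{m×n} with spectral norm ‖W₁^l‖ ≤ (c₁₀ + R₁/√n)√n and W₂^l ∈ ℝ^{m×m} with ‖W₂^l‖ ≤ (c₂₀ + R₂/√m)√m. Define the ADMM-CSNet layers x^l = (1/√n) W₁^l y + (1/√m) W₂^l (z^{l−1} − u^{l−1}), z^l = σ(x^l + u^{l−1}) (σ applied entrywise), u^l = u^{l−1} + x^l − z^l. Then ‖z^l‖ ≤ c_z^l and ‖u^l‖ ≤ c_u^l for all l ∈ {0,1,…,L}, where c_z⁰ = √m C_z, c_u⁰ = √m C_u, c_z^l = L_σ (c₁₀ + R₁/√n)√n C_y + L_σ (c₂₀ + R₂/√m) c_z^{l−1} + L_σ (1 + c₂₀ + R₂/√m) c_u^{l−1} + √m |σ(0)|, and c_u^l = (c₁₀ + R₁/√n)√n C_y + (c₂₀ + R₂/√m) c_z^{l−1} + (c₂₀ +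 R₂/√m + 1) c_u^{l−1} + c_z^l. -/

import Mathlib

open scoped BigOperators

/-- The spectral (ℓ²-operator) norm of a real matrix. -/
noncomputable def specNorm {m n : ℕ} (M : Matrix (Fin m) (Fin n) ℝ) : ℝ :=
  ‖LinearMap.toContinuousLinearMap (Matrix.toEuclideanLin M)‖

lemma specNorm_mulVec_le {a b : ℕ} (M : Matrix (Fin a) (Fin b) ℝ)
    (v : EuclideanSpace ℝ (Fin b)) :
    ‖Matrix.toEuclideanLin M v‖ ≤ specNorm M * ‖v‖ :=
  (LinearMap.toContinuousLinearMap (Matrix.toEuclideanLin M)).le_opNorm v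

lemma euclidean_norm_mono {m : ℕ} (v w : EuclideanSpace ℝ (Fin m))
    (h : ∀ i, ‖v i‖ ≤ ‖w i‖) : ‖v‖ ≤ ‖w‖ := by
  rw [EuclideanSpace.norm_eq v, EuclideanSpace.norm_eq w]
  exact Real.sqrt_le_sqrt (Finset.sum_le_sum fun i _ =>
    pow_le_pow_left₀ (norm_nonneg _) (h i) 2)

lemma euclidean_const_norm {m : ℕ} (c : ℝ) (w : EuclideanSpace ℝ (Fin m))
    (hw : ∀ i, w i = c) : ‖w‖ = Real.sqrt m * |c| := by
  rw [EuclideanSpace.norm_eq w]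
  have h1 : ∀ i : Fin m, ‖w i‖ ^ 2 = c ^ 2 := fun i => by
    rw [hw, Real.norm_eq_abs, sq_abs]
  rw [Finset.sum_congr rfl fun i _ => h1 i, Finset.sum_const, Finset.card_univ,
    Fintype.card_fin, nsmul_eq_mul, Real.sqrt_mul (Nat.cast_nonneg m),
    Real.sqrt_sq_eq_abs]

lemma sigma_vec_norm_le {m : ℕ} (σ : ℝ → ℝ) (L_σ : ℝ)
    (hσ : ∀ a b : ℝ, |σ a - σ b| ≤ L_σ * |a - b|) (hL : 0 ≤ L_σ)
    (v w : EuclideanSpace ℝ (Fin m)) (hw : ∀ i, w i = σ (v i)) :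
    ‖w‖ ≤ L_σ * ‖v‖ + Real.sqrt m * |σ 0| := by
  set cvec : EuclideanSpace ℝ (Fin m) :=
    (WithLp.equiv 2 (Fin m → ℝ)).symm (fun _ => σ 0) with hcvec
  have hc : ∀ i, cvec i = σ 0 := fun i => rfl
  calc ‖w‖ = ‖(w - cvec) + cvec‖ := by rw [sub_add_cancel]
    _ ≤ ‖w - cvec‖ + ‖cvec‖ := norm_add_le _ _
    _ ≤ L_σ * ‖v‖ + Real.sqrt m * |σ 0| := by
        refine add_le_add ?_ (le_of_eq (euclidean_const_norm (σ 0) _ hc))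
        have h1 : ‖w - cvec‖ ≤ ‖L_σ • v‖ := by
          refine euclidean_norm_mono _ _ fun i => ?_
          have h2 : (w - cvec) i = σ (v i) - σ 0 := by
            simp [hw i, hc i]
          rw [h2]
          simp only [PiLp.smul_apply, smul_eq_mul, Real.norm_eq_abs, abs_mul,
            abs_of_nonneg hL]
          simpa using hσ (v i) 0
        calc ‖w - cvec‖ ≤ ‖L_σ • v‖ := h1
          _ = L_σ * ‖v‖ := by rw [norm_smul]; simp [abs_of_nonneg hL]

/-- Bound on the hidden-layer outputs of an `L`-layer ADMM-CSNet: if `σ` is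
`L_σ`-Lipschitz, `‖y‖ ≤ √n C_y`, `‖z⁰‖ ≤ √m C_z`, `‖u⁰‖ ≤ √m C_u`, and the
per-layer weights satisfy `‖W₁^l‖ ≤ (c₁₀ + R₁/√n)√n`,
`‖W₂^l‖ ≤ (c₂₀ + R₂/√m)√m`, then `‖z^l‖ ≤ c_z^l` and `‖u^l‖ ≤ c_u^l` with the
stated recursions. -/
theorem admm_csnet_hidden_layer_norm_bound
    (n m L : ℕ) (σ : ℝ → ℝ) (L_σ : ℝ)
    (hσ : ∀ a b : ℝ, |σ a - σ b| ≤ L_σ * |a - b|)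
    (c₁₀ c₂₀ R₁ R₂ C_y C_z C_u : ℝ)
    (hc₁₀ : 0 ≤ c₁₀) (hc₂₀ : 0 ≤ c₂₀) (hR₁ : 0 ≤ R₁) (hR₂ : 0 ≤ R₂)
    (hCy : 0 ≤ C_y) (hCz : 0 ≤ C_z) (hCu : 0 ≤ C_u)
    (y : EuclideanSpace ℝ (Fin n)) (hy : ‖y‖ ≤ Real.sqrt n * C_y)
    (W₁ : ℕ → Matrix (Fin m) (Fin n) ℝ) (W₂ : ℕ → Matrix (Fin m) (Fin m) ℝ)
    (hW₁ : ∀ l, 1 ≤ l → l ≤ L →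
      specNorm (W₁ l) ≤ (c₁₀ + R₁ / Real.sqrt n) * Real.sqrt n)
    (hW₂ : ∀ l, 1 ≤ l → l ≤ L →
      specNorm (W₂ l) ≤ (c₂₀ + R₂ / Real.sqrt m) * Real.sqrt m)
    (x z u : ℕ → EuclideanSpace ℝ (Fin m))
    (hz0 : ‖z 0‖ ≤ Real.sqrt m * C_z)
    (hu0 : ‖u 0‖ ≤ Real.sqrt m * C_u)
    (hx : ∀ l, l < L → x (l + 1) = fun i =>
      (Real.sqrt n)⁻¹ * (W₁ (l + 1)).mulVec y i
        + (Real.sqrt m)⁻¹ * (W₂ (l + 1)).mulVec (z l - u l) i)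
    (hz : ∀ l, l < L → z (l + 1) = fun i => σ (x (l + 1) i + u l i))
    (hu : ∀ l, l < L → u (l + 1) = u l + x (l + 1) - z (l + 1))
    (cz cu : ℕ → ℝ)
    (hcz0 : cz 0 = Real.sqrt m * C_z) (hcu0 : cu 0 = Real.sqrt m * C_u)
    (hczrec : ∀ l, cz (l + 1) =
      L_σ * (c₁₀ + R₁ / Real.sqrt n) * Real.sqrt n * C_y
        + L_σ * (c₂₀ + R₂ / Real.sqrt m) * cz l
        + L_σ * (1 + c₂₀ + R₂ / Real.sqrt m) * cu l
        + Real.sqrt m * |σ 0|)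
    (hcurec : ∀ l, cu (l + 1) =
      (c₁₀ + R₁ / Real.sqrt n) * Real.sqrt n * C_y
        + (c₂₀ + R₂ / Real.sqrt m) * cz l
        + (c₂₀ + R₂ / Real.sqrt m + 1) * cu l
        + cz (l + 1)) :
    ∀ l ≤ L, ‖z l‖ ≤ cz l ∧ ‖u l‖ ≤ cu l := by
  have hL : 0 ≤ L_σ := by
    have h := hσ 1 0
    have h0 : (0:ℝ) ≤ |σ 1 - σ 0| := abs_nonneg _
    simp only [sub_zero, abs_one, mul_one] at h
    linarith
  have hA : 0 ≤ (c₁₀ + R₁ / Real.sqrt n) * Real.sqrt n :=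
    mul_nonneg (add_nonneg hc₁₀ (div_nonneg hR₁ (Real.sqrt_nonneg _)))
      (Real.sqrt_nonneg _)
  have hB : 0 ≤ c₂₀ + R₂ / Real.sqrt m :=
    add_nonneg hc₂₀ (div_nonneg hR₂ (Real.sqrt_nonneg _))
  have hsn : (Real.sqrt n)⁻¹ * Real.sqrt n ≤ 1 := by
    rcases eq_or_ne (Real.sqrt n) 0 with h | h
    · simp [h]
    · rw [inv_mul_cancel₀ h]
  have hsm : (Real.sqrt m)⁻¹ * Real.sqrt m ≤ 1 := by
    rcases eq_or_ne (Real.sqrt m) 0 with h | h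
    · simp [h]
    · rw [inv_mul_cancel₀ h]
  intro l
  induction l with
  | zero => intro _; rw [hcz0, hcu0]; exact ⟨hz0, hu0⟩
  | succ l ih =>
    intro hl
    have hlL : l < L := hl
    obtain ⟨ihz, ihu⟩ := ih (Nat.le_of_lt hlL)
    have hcznn : 0 ≤ cz l := le_trans (norm_nonneg _) ihz
    have hcunn : 0 ≤ cu l := le_trans (norm_nonneg _) ihu
    -- bound on x (l+1)
    have hxb : ‖x (l + 1)‖ ≤ (c₁₀ + R₁ / Real.sqrt n) * Real.sqrt n * C_y
        + (c₂₀ + R₂ / Real.sqrt m) * (cz l + cu l) := by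
      have hxX : x (l + 1) =
          (Real.sqrt n)⁻¹ • Matrix.toEuclideanLin (W₁ (l + 1)) y
          + (Real.sqrt m)⁻¹ • Matrix.toEuclideanLin (W₂ (l + 1)) (z l - u l) := by
        refine WithLp.ofLp_injective 2 ?_
        rw [hx l hlL]; rfl
      rw [hxX]
      have ht1 : ‖(Real.sqrt n)⁻¹ • Matrix.toEuclideanLin (W₁ (l + 1)) y‖ ≤
          (c₁₀ + R₁ / Real.sqrt n) * Real.sqrt n * C_y := by
        rw [norm_smul, Real.norm_eq_abs,
          abs_of_nonneg (inv_nonneg.2 (Real.sqrt_nonneg _))]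
        calc (Real.sqrt n)⁻¹ * ‖Matrix.toEuclideanLin (W₁ (l + 1)) y‖
            ≤ (Real.sqrt n)⁻¹ *
              ((c₁₀ + R₁ / Real.sqrt n) * Real.sqrt n * (Real.sqrt n * C_y)) := by
              refine mul_le_mul_of_nonneg_left ?_
                (inv_nonneg.2 (Real.sqrt_nonneg _))
              exact (specNorm_mulVec_le _ _).trans
                (mul_le_mul (hW₁ (l + 1) (Nat.le_add_left 1 l) hlL) hy
                  (norm_nonneg _) hA)
          _ = ((Real.sqrt n)⁻¹ * Real.sqrt n) *
              ((c₁₀ + R₁ / Real.sqrt n) * Real.sqrt n * C_y) := by ring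
          _ ≤ 1 * ((c₁₀ + R₁ / Real.sqrt n) * Real.sqrt n * C_y) :=
              mul_le_mul_of_nonneg_right hsn (mul_nonneg hA hCy)
          _ = (c₁₀ + R₁ / Real.sqrt n) * Real.sqrt n * C_y := one_mul _
      have hzu : ‖z l - u l‖ ≤ cz l + cu l :=
        (norm_sub_le _ _).trans (add_le_add ihz ihu)
      have ht2 : ‖(Real.sqrt m)⁻¹ • Matrix.toEuclideanLin (W₂ (l + 1)) (z l - u l)‖ ≤
          (c₂₀ + R₂ / Real.sqrt m) * (cz l + cu l) := by
        rw [norm_smul, Real.norm_eq_abs,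
          abs_of_nonneg (inv_nonneg.2 (Real.sqrt_nonneg _))]
        calc (Real.sqrt m)⁻¹ * ‖Matrix.toEuclideanLin (W₂ (l + 1)) (z l - u l)‖
            ≤ (Real.sqrt m)⁻¹ *
              ((c₂₀ + R₂ / Real.sqrt m) * Real.sqrt m * (cz l + cu l)) := by
              refine mul_le_mul_of_nonneg_left ?_
                (inv_nonneg.2 (Real.sqrt_nonneg _))
              exact (specNorm_mulVec_le _ _).trans
                (mul_le_mul (hW₂ (l + 1) (Nat.le_add_left 1 l) hlL) hzu
                  (norm_nonneg _) (mul_nonneg hB (Real.sqrt_nonneg _)))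
          _ = ((Real.sqrt m)⁻¹ * Real.sqrt m) *
              ((c₂₀ + R₂ / Real.sqrt m) * (cz l + cu l)) := by ring
          _ ≤ 1 * ((c₂₀ + R₂ / Real.sqrt m) * (cz l + cu l)) :=
              mul_le_mul_of_nonneg_right hsm
                (mul_nonneg hB (add_nonneg hcznn hcunn))
          _ = (c₂₀ + R₂ / Real.sqrt m) * (cz l + cu l) := one_mul _
      exact (norm_add_le _ _).trans (add_le_add ht1 ht2)
    -- bound on z (l+1)
    have hzv : ∀ i, z (l + 1) i = σ ((x (l + 1) + u l) i) := fun i => by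
      rw [hz l hlL]; rfl
    have hzb := sigma_vec_norm_le σ L_σ hσ hL (x (l + 1) + u l) (z (l + 1)) hzv
    have hz1 : ‖z (l + 1)‖ ≤ cz (l + 1) := by
      have h3 : ‖x (l + 1) + u l‖ ≤
          ((c₁₀ + R₁ / Real.sqrt n) * Real.sqrt n * C_y
            + (c₂₀ + R₂ / Real.sqrt m) * (cz l + cu l)) + cu l :=
        (norm_add_le _ _).trans (add_le_add hxb ihu)
      calc ‖z (l + 1)‖ ≤ L_σ * ‖x (l + 1) + u l‖ + Real.sqrt m * |σ 0| := hzb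
        _ ≤ L_σ * (((c₁₀ + R₁ / Real.sqrt n) * Real.sqrt n * C_y
              + (c₂₀ + R₂ / Real.sqrt m) * (cz l + cu l)) + cu l)
            + Real.sqrt m * |σ 0| := by
            exact add_le_add (mul_le_mul_of_nonneg_left h3 hL) le_rfl
        _ = cz (l + 1) := by rw [hczrec l]; ring
    refine ⟨hz1, ?_⟩
    -- bound on u (l+1)
    rw [hu l hlL]
    calc ‖u l + x (l + 1) - z (l + 1)‖
        ≤ ‖u l + x (l + 1)‖ + ‖z (l + 1)‖ := norm_sub_le _ _
      _ ≤ (‖u l‖ + ‖x (l + 1)‖) + ‖z (l + 1)‖ :=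
          add_le_add (norm_add_le _ _) le_rfl
      _ ≤ (cu l + ((c₁₀ + R₁ / Real.sqrt n) * Real.sqrt n * C_y
            + (c₂₀ + R₂ / Real.sqrt m) * (cz l + cu l))) + cz (l + 1) :=
          add_le_add (add_le_add ihu hxb) hz1
      _ = cu (l + 1) := by rw [hcurec l]; ring
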